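/- Let 0 < β < 1/2. There is a constant c₁ > 0 such that for every y₀ ∈ V^{-β}(T³) and every t > 0, the time-integral of Φ along the heat flow satisfies |∫₀ᵗ Φ(S(τ;y₀)) dτ| ≤ c₁‖y₀‖_{H^{-β}}, where S(t;y₀) is the solution at time t of the heat equation ∂_t z = Δz on T³ with z(0)=y₀. -/

import Mathlib

set_option maxHeartbeats 1600000


open MeasureTheory

noncomputable section

abbrev Z3 := Fin 3 → ℤ
abbrev C3 := Fin 3 → ℂ

/-- squared euclidean norm of a frequency vector -/
def knormSq (k : Z3) : ℝ := ∑ i, ((k i : ℝ))^2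

def knorm (k : Z3) : ℝ := Real.sqrt (knormSq k)

/-- squared Sobolev H^s norm via Fourier coefficients -/
def sobNormSq (s : ℝ) (c : Z3 → C3) : ℝ :=
  ∑' k : Z3, (knorm k) ^ (2*s) * (∑ i, ‖c k i‖ ^ 2)

def sobNorm (s : ℝ) (c : Z3 → C3) : ℝ := Real.sqrt (sobNormSq s c)

def MeanZero (c : Z3 → C3) : Prop := c 0 = 0

def DivFree (c : Z3 → C3) : Prop := ∀ k, (∑ i, (k i : ℂ) * c k i) = 0

def kcross (k : Z3) (v : C3) : C3 :=
  ![ (k 1 : ℂ) * v 2 - (k 2 : ℂ) * v 1,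
     (k 2 : ℂ) * v 0 - (k 0 : ℂ) * v 2,
     (k 0 : ℂ) * v 1 - (k 1 : ℂ) * v 0 ]

/-- Fourier coefficients of curl⁻¹ : (curl⁻¹ω)^(k) = i (k × ω̂(k))/|k|² -/
def curlInv (c : Z3 → C3) : Z3 → C3 :=
  fun k => if k = 0 then 0 else (Complex.I / (knormSq k : ℂ)) • kcross k (c k)

/-- Ψ(y₁,y₂,y₃) = ∫_{T³} (y₁,∇)curl⁻¹y₂ · y₃ dx, written via Fourier series:
the product of three Fourier series integrated over T³ picks out frequencies
k + l + m = 0, with the gradient contributing the factor i·l. -/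
def Psi (c1 c2 c3 : Z3 → C3) : ℂ :=
  (2*Real.pi)^3 * ∑' p : Z3 × Z3,
    (∑ i, c1 p.1 i * (Complex.I * ((p.2 i : ℤ) : ℂ))) *
    (∑ i, curlInv c2 p.2 i * c3 (-(p.1 + p.2)) i)

/-- Φ(u) = Ψ(u,u,u)/∫|u|², with ∫_{T³}|u|² = (2π)³ ∑_k |û(k)|².  Φ(0)=0. -/
def Phi (c : Z3 → C3) : ℂ :=
  if sobNormSq 0 c = 0 then 0
  else Psi c c c / (((2*Real.pi)^3 * sobNormSq 0 c : ℝ) : ℂ)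

/-- heat semigroup S(t;·) on Fourier coefficients -/
def heat (t : ℝ) (c : Z3 → C3) : Z3 → C3 :=
  fun k i => c k i * Complex.exp (-(knormSq k) * t)


-- helpers
lemma knormSq_nonneg (k : Z3) : 0 ≤ knormSq k :=
  Finset.sum_nonneg fun _ _ => sq_nonneg _

lemma knorm_nonneg (k : Z3) : 0 ≤ knorm k := Real.sqrt_nonneg _

lemma knorm_sq (k : Z3) : knorm k ^ 2 = knormSq k := Real.sq_sqrt (knormSq_nonneg k)

lemma knormSq_zero : knormSq 0 = 0 := by simp [knormSq]

lemma knorm_zero : knorm 0 = 0 := by simp [knorm, knormSq_zero]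

lemma one_le_knormSq {k : Z3} (hk : k ≠ 0) : 1 ≤ knormSq k := by
  obtain ⟨i, hi⟩ : ∃ i, k i ≠ 0 := by
    by_contra h; push_neg at h; exact hk (funext h)
  have h1 : (1:ℝ) ≤ ((k i : ℝ))^2 := by
    have : (1:ℤ) ≤ (k i)^2 := by
      rcases lt_or_gt_of_ne hi with h | h <;> nlinarith
    have h2 : ((1:ℤ):ℝ) ≤ (((k i)^2 : ℤ) : ℝ) := Int.cast_le.2 this
    push_cast at h2; linarith
  calc (1:ℝ) ≤ ((k i:ℝ))^2 := h1
    _ ≤ knormSq k := Finset.single_le_sum (f := fun j => ((k j : ℝ))^2)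
        (fun j _ => sq_nonneg _) (Finset.mem_univ i)

lemma one_le_knorm {k : Z3} (hk : k ≠ 0) : 1 ≤ knorm k := by
  rw [show (1:ℝ) = Real.sqrt 1 by simp [Real.sqrt_one]]
  exact Real.sqrt_le_sqrt (one_le_knormSq hk)

lemma knorm_pos {k : Z3} (hk : k ≠ 0) : 0 < knorm k :=
  lt_of_lt_of_le one_pos (one_le_knorm hk)

-- Cauchy-Schwarz for tsums
lemma summable_mul_of_sq {ι : Type*} {x y : ι → ℝ}
    (hx2 : Summable fun i => x i ^ 2) (hy2 : Summable fun i => y i ^ 2) :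
    Summable fun i => x i * y i := by
  have h := (hx2.add hy2).div_const 2
  refine Summable.of_norm_bounded h fun i => ?_
  simp only [Real.norm_eq_abs]
  rw [abs_le]; constructor <;> nlinarith [sq_nonneg (x i + y i), sq_nonneg (x i - y i)]

lemma tsum_mul_le_sqrt {ι : Type*} {x y : ι → ℝ}
    (hx : ∀ i, 0 ≤ x i) (hy : ∀ i, 0 ≤ y i)
    (hx2 : Summable fun i => x i ^ 2) (hy2 : Summable fun i => y i ^ 2) :
    ∑' i, x i * y i ≤ Real.sqrt (∑' i, x i ^ 2) * Real.sqrt (∑' i, y i ^ 2) := by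
  refine Summable.tsum_le_of_sum_le (summable_mul_of_sq hx2 hy2) fun s => ?_
  refine (Real.sum_mul_le_sqrt_mul_sqrt s x y).trans ?_
  gcongr <;>
    [exact Summable.sum_le_tsum s (fun i _ => sq_nonneg _) hx2;
     exact Summable.sum_le_tsum s (fun i _ => sq_nonneg _) hy2]

-- 1d summability
lemma summable_int_one_add_sq {u : ℝ} (hu : 1/2 < u) :
    Summable fun n : ℤ => ((1:ℝ) + (n:ℝ)^2) ^ (-u) := by
  have hnat : Summable fun n : ℕ => ((1:ℝ) + (n:ℝ)^2) ^ (-u) := by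
    refine Summable.of_norm_bounded_eventually_nat (g := fun n => (n:ℝ) ^ (-(2*u)))
      (Real.summable_nat_rpow.2 (by linarith)) ?_
    filter_upwards [Filter.eventually_gt_atTop 0] with n hn
    have hn' : (0:ℝ) < (n:ℝ) := by exact_mod_cast hn
    have h1 : ((n:ℝ)^2) ^ (-u) ≤ ((n:ℝ)^2) ^ (-u) := le_rfl
    have key : ((1:ℝ) + (n:ℝ)^2) ^ (-u) ≤ ((n:ℝ)^2) ^ (-u) :=
      Real.rpow_le_rpow_of_nonpos (by positivity) (by linarith) (by linarith)
    have heq : ((n:ℝ)^2) ^ (-u) = (n:ℝ) ^ (-(2*u)) := by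
      rw [← Real.rpow_natCast (n:ℝ) 2, ← Real.rpow_mul hn'.le]
      norm_num
    rw [Real.norm_eq_abs, abs_of_nonneg (Real.rpow_nonneg (by positivity) _)]
    rw [← heq]; exact key
  exact Summable.of_nat_of_neg (by simpa using hnat) (by simpa using hnat)

def e3 : Z3 ≃ ℤ × ℤ × ℤ where
  toFun k := (k 0, k 1, k 2)
  invFun p := ![p.1, p.2.1, p.2.2]
  left_inv k := by
    funext i
    fin_cases i <;> simp
  right_inv p := rfl

lemma summable_prod3 {f : ℤ → ℝ} (hf : Summable f) (h0 : ∀ n, 0 ≤ f n) :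
    Summable fun k : Z3 => f (k 0) * (f (k 1) * f (k 2)) := by
  rw [← e3.symm.summable_iff]
  have h : Summable fun p : ℤ × ℤ × ℤ => f p.1 * (f p.2.1 * f p.2.2) :=
    hf.mul_of_nonneg (hf.mul_of_nonneg hf h0 h0) h0
      (fun p => mul_nonneg (h0 _) (h0 _))
  refine h.congr fun p => ?_
  rfl

lemma lattice_summable {r : ℝ} (hr : 3 < r) :
    Summable fun k : Z3 => knorm k ^ (-r) := by
  set f : ℤ → ℝ := fun n => ((1:ℝ) + (n:ℝ)^2) ^ (-(r/6)) with hf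
  have hf0 : ∀ n, 0 ≤ f n := fun n => Real.rpow_nonneg (by positivity) _
  have hfs : Summable f := summable_int_one_add_sq (by linarith)
  have hmaj : Summable fun k : Z3 => (2:ℝ)^(r/2) * (f (k 0) * (f (k 1) * f (k 2))) :=
    (summable_prod3 hfs hf0).mul_left _
  refine Summable.of_nonneg_of_le (fun k => Real.rpow_nonneg (knorm_nonneg k) _)
    (fun k => ?_) hmaj
  by_cases hk : k = 0
  · subst hk
    rw [knorm_zero, Real.zero_rpow (by linarith)]
    positivity
  · -- knorm k ^ (-r) = q ^ (-(r/2)) ≤ 2^(r/2) * ∏ (1+k_i²)^(-(r/6))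
    set q := knormSq k with hq
    have hq1 : 1 ≤ q := one_le_knormSq hk
    have hq0 : 0 < q := by linarith
    have e1 : knorm k ^ (-r) = q ^ (-(r/2)) := by
      rw [knorm, Real.sqrt_eq_rpow, ← Real.rpow_mul hq0.le]
      ring_nf
    rw [e1]
    have step1 : q ^ (-(r/2)) ≤ (2:ℝ)^(r/2) * ((1+q) ^ (-(r/2))) := by
      have h2q : 1 + q ≤ 2 * q := by linarith
      have : (2*q) ^ (-(r/2)) ≤ (1+q) ^ (-(r/2)) :=
        Real.rpow_le_rpow_of_nonpos (by linarith) h2q (by linarith)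
      have hmul : (2*q) ^ (-(r/2)) = (2:ℝ)^(-(r/2)) * q ^ (-(r/2)) :=
        Real.mul_rpow (by norm_num) hq0.le
      have h2 : (0:ℝ) < (2:ℝ)^(r/2) := Real.rpow_pos_of_pos two_pos _
      calc q ^ (-(r/2)) = (2:ℝ)^(r/2) * ((2:ℝ)^(-(r/2)) * q ^ (-(r/2))) := by
            rw [← mul_assoc, ← Real.rpow_add two_pos]; simp
        _ = (2:ℝ)^(r/2) * (2*q) ^ (-(r/2)) := by rw [hmul]
        _ ≤ (2:ℝ)^(r/2) * (1+q) ^ (-(r/2)) := by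
            exact mul_le_mul_of_nonneg_left this h2.le

    refine step1.trans ?_
    gcongr (2:ℝ)^(r/2) * ?_
    · -- (1+q)^(-(r/2)) ≤ f(k0)*(f(k1)*f(k2))
      have hbound : ∀ i : Fin 3, ((1+q) : ℝ) ^ (-(r/6)) ≤ f (k i) := by
        intro i
        have h1 : (1:ℝ) + (k i:ℝ)^2 ≤ 1 + q := by
          have : ((k i:ℝ))^2 ≤ q := Finset.single_le_sum
            (f := fun j => ((k j : ℝ))^2) (fun j _ => sq_nonneg _) (Finset.mem_univ i)
          linarith
        exact Real.rpow_le_rpow_of_nonpos (by positivity) h1 (by linarith)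
      have heq : ((1+q) : ℝ) ^ (-(r/2)) =
          ((1+q):ℝ)^(-(r/6)) * (((1+q):ℝ)^(-(r/6)) * ((1+q):ℝ)^(-(r/6))) := by
        rw [← Real.rpow_add (by linarith), ← Real.rpow_add (by linarith)]
        ring_nf
      rw [heq]
      have h6 : (0:ℝ) ≤ ((1+q):ℝ)^(-(r/6)) := Real.rpow_nonneg (by linarith) _
      exact mul_le_mul (hbound 0) (mul_le_mul (hbound 1) (hbound 2) h6 (hf0 _))
        (mul_nonneg h6 h6) (hf0 _)

set_option maxHeartbeats 1000000 in
lemma heat_l1 (β : ℝ) (hβ0 : 0 < β) (hβ : β < 1/2) (y₀ : Z3 → C3) (hmz : MeanZero y₀)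
    (hsum : Summable (fun k : Z3 => (knorm k) ^ (2*(-β)) * (∑ i, ‖y₀ k i‖ ^ 2)))
    {τ : ℝ} (hτ : 0 < τ) :
    Summable fun k : Z3 => Real.sqrt (∑ i, ‖y₀ k i‖ ^ 2) *
      Real.exp (-(knormSq k) * τ) := by
  classical
  set b : Z3 → ℝ := fun k => Real.sqrt (∑ i, ‖y₀ k i‖ ^ 2) with hbdef
  set a : Z3 → ℝ := fun k => b k * Real.exp (-(knormSq k) * τ) with hadef
  have hb0 : ∀ k, 0 ≤ b k := fun k => Real.sqrt_nonneg _
  have ha0 : ∀ k, 0 ≤ a k := fun k => mul_nonneg (hb0 k) (Real.exp_pos _).le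
  have hbz : b 0 = 0 := by
    have h0 : y₀ 0 = 0 := hmz
    simp [hbdef, h0]
  have hbsq : ∀ k, b k ^ 2 = ∑ i, ‖y₀ k i‖ ^ 2 := fun k =>
    Real.sq_sqrt (Finset.sum_nonneg fun i _ => sq_nonneg _)
  set M' : ℝ := ∑' k : Z3, (knorm k) ^ (2*(-β)) * (∑ i, ‖y₀ k i‖ ^ 2) with hM'def
  have hM0 : 0 ≤ M' := tsum_nonneg fun k =>
    mul_nonneg (Real.rpow_nonneg (knorm_nonneg k) _) (Finset.sum_nonneg fun i _ => sq_nonneg _)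
  have hbM : ∀ k, k ≠ 0 → b k ≤ Real.sqrt M' * knorm k ^ β := by
    intro k hk
    have hterm : (knorm k) ^ (2*(-β)) * (∑ i, ‖y₀ k i‖ ^ 2) ≤ M' :=
      Summable.le_tsum hsum k fun j _ => mul_nonneg (Real.rpow_nonneg (knorm_nonneg j) _)
        (Finset.sum_nonneg fun i _ => sq_nonneg _)
    have hKpos : 0 < knorm k := knorm_pos hk
    have hrp : (0:ℝ) < knorm k ^ (2*(-β)) := Real.rpow_pos_of_pos hKpos _
    have h1 : b k ^ 2 ≤ M' * knorm k ^ (2*β) := by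
      have h2 : knorm k ^ (2*(-β)) * knorm k ^ (2*β) = 1 := by
        rw [← Real.rpow_add hKpos]; norm_num
      rw [hbsq k]
      calc (∑ i, ‖y₀ k i‖ ^ 2)
          = 1 * (∑ i, ‖y₀ k i‖ ^ 2) := (one_mul _).symm
        _ = knorm k ^ (2*β) * knorm k ^ (2*(-β)) * (∑ i, ‖y₀ k i‖ ^ 2) := by
            rw [← Real.rpow_add hKpos]; norm_num
        _ ≤ knorm k ^ (2*β) * M' := by
            rw [mul_assoc]
            exact mul_le_mul_of_nonneg_left hterm (Real.rpow_nonneg (knorm_nonneg k) _)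
        _ = M' * knorm k ^ (2*β) := mul_comm _ _
    calc b k = Real.sqrt (b k ^ 2) := by rw [Real.sqrt_sq (hb0 k)]
      _ ≤ Real.sqrt (M' * knorm k ^ (2*β)) := Real.sqrt_le_sqrt h1
      _ = Real.sqrt M' * knorm k ^ β := by
          have hs : Real.sqrt (knorm k ^ (2*β)) = knorm k ^ β := by
            rw [Real.sqrt_eq_rpow, ← Real.rpow_mul (knorm_nonneg k)]
            congr 1; ring
          rw [Real.sqrt_mul hM0, hs]
  -- summability of a
  have hexp_le : ∀ k : Z3, k ≠ 0 → Real.exp (-(knormSq k) * τ) ≤ 27 / (knormSq k * τ)^3 := by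
    intro k hk
    have hq1 : 1 ≤ knormSq k := one_le_knormSq hk
    have hqτ : 0 < knormSq k * τ := mul_pos (by linarith) hτ
    have h1 : knormSq k * τ / 3 + 1 ≤ Real.exp (knormSq k * τ / 3) := by
      have := Real.add_one_le_exp (knormSq k * τ / 3); linarith
    have h2 : (knormSq k * τ)^3 / 27 ≤ Real.exp (knormSq k * τ) := by
      have h3 : (knormSq k * τ / 3)^3 ≤ Real.exp (knormSq k * τ / 3) ^ 3 := by
        apply pow_le_pow_left₀ (by positivity) (by linarith)
      calc (knormSq k * τ)^3 / 27 = (knormSq k * τ / 3)^3 := by ring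
        _ ≤ Real.exp (knormSq k * τ / 3) ^ 3 := h3
        _ = Real.exp (knormSq k * τ) := by rw [← Real.exp_nat_mul]; ring_nf
    rw [show -(knormSq k) * τ = -(knormSq k * τ) by ring, Real.exp_neg, ← one_div,
      div_le_div_iff₀ (Real.exp_pos _) (by positivity)]
    nlinarith [h2]
  have hA_maj : ∀ k : Z3, a k ≤ Real.sqrt M' * (27 / τ^3) * knorm k ^ (-(4:ℝ)) := by
    intro k
    by_cases hk : k = 0
    · subst hk
      rw [hadef]; simp only [hbz, zero_mul]
      exact mul_nonneg (by positivity) (Real.rpow_nonneg (knorm_nonneg 0) _)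
    · have hK1 : 1 ≤ knorm k := one_le_knorm hk
      have hq0 : 0 < knormSq k := lt_of_lt_of_le one_pos (one_le_knormSq hk)
      have hKpos : 0 < knorm k := by linarith
      have hKβ : knorm k ^ β ≤ knorm k := by
        calc knorm k ^ β ≤ knorm k ^ (1:ℝ) :=
              Real.rpow_le_rpow_of_exponent_le hK1 (by linarith)
          _ = knorm k := Real.rpow_one _
      have h4 : knorm k ^ (-(4:ℝ)) = (knorm k ^ (4:ℕ))⁻¹ := by
        rw [Real.rpow_neg (knorm_nonneg k)]
        congr 1
        rw [show ((4:ℝ)) = ((4:ℕ):ℝ) by norm_num, Real.rpow_natCast]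
      have hq : knormSq k = knorm k ^ 2 := (knorm_sq k).symm
      calc a k = b k * Real.exp (-(knormSq k) * τ) := rfl
        _ ≤ (Real.sqrt M' * knorm k ^ β) * (27 / (knormSq k * τ)^3) := by
            apply mul_le_mul (hbM k hk) (hexp_le k hk) (Real.exp_pos _).le
            exact mul_nonneg (Real.sqrt_nonneg _) (Real.rpow_nonneg (knorm_nonneg k) _)
        _ ≤ (Real.sqrt M' * knorm k) * (27 / (knormSq k * τ)^3) := by
            apply mul_le_mul_of_nonneg_right _
              (le_of_lt (div_pos (by norm_num) (pow_pos (mul_pos hq0 hτ) 3)))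
            exact mul_le_mul_of_nonneg_left hKβ (Real.sqrt_nonneg _)
        _ ≤ Real.sqrt M' * (27 / τ^3) * knorm k ^ (-(4:ℝ)) := by
            rw [h4, hq, show (knorm k ^ 2 * τ)^3 = (knorm k)^6 * τ^3 by ring]
            have e1 : (Real.sqrt M' * knorm k) * (27 / ((knorm k)^6 * τ^3))
                = Real.sqrt M' * (27 / τ^3) * ((knorm k)^5)⁻¹ := by
              field_simp
            have e2 : ((knorm k)^5)⁻¹ ≤ ((knorm k)^4)⁻¹ := by
              apply inv_anti₀ (by positivity)
              exact pow_le_pow_right₀ hK1 (by norm_num)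
            rw [e1]
            exact mul_le_mul_of_nonneg_left e2 (by positivity)
  have hA_sum : Summable a := by
    refine Summable.of_nonneg_of_le ha0 hA_maj ?_
    exact (lattice_summable (by norm_num : (3:ℝ) < 4)).mul_left _
  exact hA_sum

set_option maxHeartbeats 1000000 in
lemma heat_abs (y₀ : Z3 → C3) (τ : ℝ) (k : Z3) (i : Fin 3) :
    ‖heat τ y₀ k i‖ = ‖y₀ k i‖ * Real.exp (-(knormSq k) * τ) := by
  unfold heat
  rw [norm_mul, Complex.norm_exp]
  congr 2
  have : (-(knormSq k : ℂ) * (τ:ℂ)) = ((-(knormSq k) * τ : ℝ) : ℂ) := by push_cast; ring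
  rw [this, Complex.ofReal_re]

lemma abs_int_le_knorm (l : Z3) (i : Fin 3) : |((l i : ℝ))| ≤ knorm l := by
  rw [← Real.sqrt_sq_eq_abs]
  exact Real.sqrt_le_sqrt (Finset.single_le_sum (f := fun j => ((l j : ℝ))^2)
    (fun j _ => sq_nonneg _) (Finset.mem_univ i))

theorem phi_le (β : ℝ) (hβ0 : 0 < β) (hβ : β < 1/2) (y₀ : Z3 → C3) (hmz : MeanZero y₀)
    (hsum : Summable (fun k : Z3 => (knorm k) ^ (2*(-β)) * (∑ i, ‖y₀ k i‖ ^ 2)))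
    {τ : ℝ} (hτ : 0 < τ) :
    ‖Phi (heat τ y₀)‖ ≤
      18 * ∑' k : Z3, Real.sqrt (∑ i, ‖y₀ k i‖ ^ 2) * Real.exp (-(knormSq k) * τ) := by
  classical
  set b : Z3 → ℝ := fun k => Real.sqrt (∑ i, ‖y₀ k i‖ ^ 2) with hbdef
  set a : Z3 → ℝ := fun k => b k * Real.exp (-(knormSq k) * τ) with hadef
  set c : Z3 → C3 := heat τ y₀ with hcdef
  have hb0 : ∀ k, 0 ≤ b k := fun k => Real.sqrt_nonneg _
  have ha0 : ∀ k, 0 ≤ a k := fun k => mul_nonneg (hb0 k) (Real.exp_pos _).le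
  have hbz : b 0 = 0 := by
    have h0 : y₀ 0 = 0 := hmz
    simp [hbdef, h0]
  have hbsq : ∀ k, b k ^ 2 = ∑ i, ‖y₀ k i‖ ^ 2 := fun k =>
    Real.sq_sqrt (Finset.sum_nonneg fun i _ => sq_nonneg _)
  have hcabs : ∀ k i, ‖c k i‖ = ‖y₀ k i‖ * Real.exp (-(knormSq k) * τ) :=
    fun k i => heat_abs y₀ τ k i
  have hyb : ∀ k i, ‖y₀ k i‖ ≤ b k := by
    intro k i
    rw [hbdef]
    rw [show ‖y₀ k i‖ = Real.sqrt (‖y₀ k i‖ ^ 2) by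
      rw [Real.sqrt_sq (norm_nonneg _)]]
    exact Real.sqrt_le_sqrt (Finset.single_le_sum
      (f := fun j => ‖y₀ k j‖ ^ 2) (fun j _ => sq_nonneg _) (Finset.mem_univ i))
  have hcib : ∀ k i, ‖c k i‖ ≤ a k := by
    intro k i
    rw [hcabs k i, hadef]
    exact mul_le_mul_of_nonneg_right (hyb k i) (Real.exp_pos _).le
  have hc2 : ∀ k, (∑ i, ‖c k i‖ ^ 2) = a k ^ 2 := by
    intro k
    simp only [hadef, hcabs, mul_pow]
    rw [← Finset.sum_mul, hbsq k]
  have hA_sum : Summable a := by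
    simp only [hadef, hbdef]
    exact heat_l1 β hβ0 hβ y₀ hmz hsum hτ
  have hA1 : ∀ k, a k ≤ ∑' j, a j := fun k => Summable.le_tsum hA_sum k fun j _ => ha0 j
  have hA2_sum : Summable fun k => a k ^ 2 := by
    refine Summable.of_nonneg_of_le (fun k => sq_nonneg _) (fun k => ?_) (hA_sum.mul_left (∑' j, a j))
    rw [sq]
    exact mul_le_mul_of_nonneg_right (hA1 k) (ha0 k)
  set D : ℝ := sobNormSq 0 c with hDdef
  have hD : D = ∑' k, a k ^ 2 := by
    rw [hDdef, sobNormSq]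
    refine tsum_congr fun k => ?_
    rw [hc2 k, show (2*(0:ℝ)) = 0 by norm_num, Real.rpow_zero, one_mul]
  have hDsum0 : 0 ≤ ∑' k, a k ^ 2 := tsum_nonneg fun k => sq_nonneg _
  have hD0 : 0 ≤ D := hD ▸ hDsum0
  have hRHS0 : 0 ≤ 18 * ∑' k : Z3, b k * Real.exp (-(knormSq k) * τ) := by
    refine mul_nonneg (by norm_num) (tsum_nonneg fun k => ha0 k)
  by_cases hDz : sobNormSq 0 c = 0
  · rw [Phi, if_pos hDz]
    rw [norm_zero]
    exact hRHS0
  · have hDpos : 0 < D := lt_of_le_of_ne hD0 (Ne.symm hDz)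
    -- the double sum and its bound
    set m : Z3 × Z3 → Z3 := fun p => -(p.1 + p.2) with hmdef
    set T : Z3 × Z3 → ℂ := fun p =>
      (∑ i, c p.1 i * (Complex.I * ((p.2 i : ℤ) : ℂ))) *
      (∑ i, curlInv c p.2 i * c (m p) i) with hTdef
    set g : Z3 × Z3 → ℝ := fun p => a p.1 * (a p.2 * a (m p)) with hgdef
    have hg0 : ∀ p, 0 ≤ g p := fun p => mul_nonneg (ha0 _) (mul_nonneg (ha0 _) (ha0 _))
    have hT : ∀ p, ‖T p‖ ≤ 18 * g p := by
      rintro ⟨k, l⟩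
      by_cases hl : l = 0
      · have : T (k, l) = 0 := by
          rw [hTdef]
          simp only [hl, curlInv, if_pos rfl]
          simp
        rw [this]
        simpa using mul_nonneg (by norm_num : (0:ℝ) ≤ 18) (hg0 (k, l))
      · have hqpos : 0 < knormSq l := lt_of_lt_of_le one_pos (one_le_knormSq hl)
        have hKpos : 0 < knorm l := knorm_pos hl
        -- first factor
        have hf1 : ‖∑ i, c k i * (Complex.I * ((l i : ℤ) : ℂ))‖ ≤
            3 * (a k * knorm l) := by
          calc ‖∑ i, c k i * (Complex.I * ((l i : ℤ) : ℂ))‖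
              ≤ ∑ i, ‖c k i * (Complex.I * ((l i : ℤ) : ℂ))‖ :=
                norm_sum_le _ _
            _ ≤ ∑ _i : Fin 3, a k * knorm l := by
                apply Finset.sum_le_sum
                intro i _
                rw [norm_mul, norm_mul, Complex.norm_I, one_mul, Complex.norm_intCast]
                exact mul_le_mul (hcib k i) (abs_int_le_knorm l i) (abs_nonneg _) (ha0 k)
            _ = 3 * (a k * knorm l) := by
                rw [Finset.sum_const]
                simp [mul_comm]
        -- kcross bound
        have hkc : ∀ i, ‖kcross l (c l) i‖ ≤ 2 * (knorm l * a l) := by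
          intro i
          have habs2 : ∀ (s t : Fin 3), ‖(l s : ℂ) * c l t‖ ≤ knorm l * a l := by
            intro s t
            rw [norm_mul, Complex.norm_intCast]
            exact mul_le_mul (abs_int_le_knorm l s) (hcib l t) (norm_nonneg _)
              (knorm_nonneg l)
          fin_cases i <;>
          · simp only [kcross, Matrix.cons_val_zero, Matrix.cons_val_one, Matrix.head_cons,
              Matrix.cons_val_two, Matrix.tail_cons]
            refine (norm_sub_le _ _).trans ?_
            have := habs2 1 2; have := habs2 2 1; have := habs2 2 0; have := habs2 0 2
            have := habs2 0 1; have := habs2 1 0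
            linarith
        -- curlInv bound
        have hci : ∀ i, ‖curlInv c l i‖ ≤
            (knormSq l)⁻¹ * (2 * (knorm l * a l)) := by
          intro i
          rw [curlInv]
          simp only [if_neg hl, Pi.smul_apply, smul_eq_mul]
          rw [norm_mul, norm_div, Complex.norm_I, Complex.norm_real, Real.norm_eq_abs, abs_of_pos hqpos, one_div]
          exact mul_le_mul_of_nonneg_left (hkc i) (by positivity)
        have hf2 : ‖∑ i, curlInv c l i * c (m (k,l)) i‖ ≤
            3 * ((knormSq l)⁻¹ * (2 * (knorm l * a l)) * a (m (k,l))) := by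
          calc ‖∑ i, curlInv c l i * c (m (k,l)) i‖
              ≤ ∑ i, ‖curlInv c l i * c (m (k,l)) i‖ := norm_sum_le _ _
            _ ≤ ∑ _i : Fin 3, (knormSq l)⁻¹ * (2 * (knorm l * a l)) * a (m (k,l)) := by
                apply Finset.sum_le_sum
                intro i _
                rw [norm_mul]
                exact mul_le_mul (hci i) (hcib _ i) (norm_nonneg _) (by positivity)
            _ = 3 * ((knormSq l)⁻¹ * (2 * (knorm l * a l)) * a (m (k,l))) := by
                rw [Finset.sum_const]
                simp
        have hK2 : knorm l * knorm l = knormSq l := by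
          rw [← sq]; exact knorm_sq l
        calc ‖T (k, l)‖
            = ‖∑ i, c k i * (Complex.I * ((l i : ℤ) : ℂ))‖ *
              ‖∑ i, curlInv c l i * c (m (k,l)) i‖ := by rw [hTdef, norm_mul]
          _ ≤ (3 * (a k * knorm l)) *
              (3 * ((knormSq l)⁻¹ * (2 * (knorm l * a l)) * a (m (k,l)))) := by
              exact mul_le_mul hf1 hf2 (norm_nonneg _) (by positivity)
          _ = 18 * (a k * (a l * a (m (k,l)))) * (knorm l * knorm l * (knormSq l)⁻¹) := by ring
          _ = 18 * g (k, l) := by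
              rw [hK2, mul_inv_cancel₀ hqpos.ne', mul_one, hgdef]
    -- summability of g
    have hg_sum : Summable g := by
      have h12 : Summable fun p : Z3 × Z3 => a p.1 * a p.2 :=
        hA_sum.mul_of_nonneg hA_sum (fun k => ha0 k) (fun k => ha0 k)
      refine Summable.of_nonneg_of_le hg0 (fun p => ?_) (h12.mul_right (∑' j, a j))
      calc g p = a p.1 * (a p.2 * a (m p)) := rfl
        _ ≤ a p.1 * (a p.2 * (∑' j, a j)) := by
            apply mul_le_mul_of_nonneg_left _ (ha0 _)
            exact mul_le_mul_of_nonneg_left (hA1 _) (ha0 _)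
        _ = a p.1 * a p.2 * (∑' j, a j) := by ring
    have hT_sum : Summable fun p => ‖T p‖ :=
      Summable.of_nonneg_of_le (fun p => norm_nonneg _) hT (hg_sum.mul_left 18)
    -- inner Cauchy-Schwarz
    have hinner : ∀ k : Z3, (Summable fun l => a l * a (-(k + l))) ∧
        (∑' l, a l * a (-(k + l))) ≤ ∑' j, a j ^ 2 := by
      intro k
      have hinv : Function.Involutive (fun l : Z3 => -(k + l)) := by
        intro x
        funext i
        simp only [Pi.neg_apply, Pi.add_apply]
        ring
      set σ : Equiv.Perm Z3 := hinv.toPerm _ with hσdef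
      have hσ : ∀ l, σ l = -(k + l) := fun l => rfl
      have hy2 : Summable fun l => a (-(k + l)) ^ 2 := by
        have := (σ.summable_iff (f := fun j => a j ^ 2)).2 hA2_sum
        refine this.congr fun l => ?_
        simp [Function.comp, hσ]
      have hy2t : (∑' l, a (-(k + l)) ^ 2) = ∑' j, a j ^ 2 := by
        rw [← σ.tsum_eq (f := fun j => a j ^ 2)]
        exact tsum_congr fun l => by rw [hσ l]
      constructor
      · exact summable_mul_of_sq hA2_sum hy2
      · calc (∑' l, a l * a (-(k + l)))
            ≤ Real.sqrt (∑' l, a l ^ 2) * Real.sqrt (∑' l, a (-(k + l)) ^ 2) :=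
              tsum_mul_le_sqrt (fun l => ha0 l) (fun l => ha0 _) hA2_sum hy2
          _ = ∑' j, a j ^ 2 := by rw [hy2t, Real.mul_self_sqrt hDsum0]
    -- total bound on ∑' g
    have hg_le : ∑' p, g p ≤ (∑' j, a j) * (∑' j, a j ^ 2) := by
      have hfiber : ∀ k : Z3, Summable fun l => g (k, l) := by
        intro k
        exact ((hinner k).1.mul_left (a k)).congr fun l => by rw [hgdef]
      rw [Summable.tsum_prod' hg_sum hfiber]
      have hstep : ∀ k : Z3, (∑' l, g (k, l)) = a k * ∑' l, a l * a (-(k + l)) := by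
        intro k
        rw [← tsum_mul_left]
      calc (∑' (k : Z3) (l : Z3), g (k, l)) = ∑' k, a k * ∑' l, a l * a (-(k + l)) :=
            tsum_congr hstep
        _ ≤ ∑' k, a k * (∑' j, a j ^ 2) := by
            apply Summable.tsum_le_tsum
            · intro k
              exact mul_le_mul_of_nonneg_left (hinner k).2 (ha0 k)
            · refine Summable.of_nonneg_of_le (fun k => mul_nonneg (ha0 k)
                (tsum_nonneg fun l => mul_nonneg (ha0 l) (ha0 _)))
                (fun k => mul_le_mul_of_nonneg_left (hinner k).2 (ha0 k))
                (hA_sum.mul_right _)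
            · exact hA_sum.mul_right _
        _ = (∑' j, a j) * (∑' j, a j ^ 2) := by rw [tsum_mul_right]
    -- Psi bound
    have h2π : ‖(2*(Real.pi:ℂ))^3‖ = (2*Real.pi)^3 := by
      rw [norm_pow, norm_mul, Complex.norm_two, Complex.norm_real, Real.norm_eq_abs,
        abs_of_pos Real.pi_pos]
    have hPsi : ‖Psi c c c‖ ≤
        (2*Real.pi)^3 * (18 * ((∑' j, a j) * (∑' j, a j ^ 2))) := by
      rw [Psi, norm_mul]
      have hTt : ‖∑' p, T p‖ ≤ 18 * ∑' p, g p := by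
        calc ‖∑' p, T p‖ = ‖∑' p, T p‖ := rfl
          _ ≤ ∑' p, ‖T p‖ := norm_tsum_le_tsum_norm (by
              exact hT_sum)
          _ = ∑' p, ‖T p‖ := rfl
          _ ≤ ∑' p, 18 * g p := Summable.tsum_le_tsum hT hT_sum (hg_sum.mul_left 18)
          _ = 18 * ∑' p, g p := tsum_mul_left
      calc ‖(2*(Real.pi:ℂ))^3‖ * ‖∑' p, T p‖
          ≤ (2*Real.pi)^3 * (18 * ∑' p, g p) := by
            rw [h2π]
            exact mul_le_mul_of_nonneg_left hTt (by positivity)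
        _ ≤ (2*Real.pi)^3 * (18 * ((∑' j, a j) * (∑' j, a j ^ 2))) := by
            exact mul_le_mul_of_nonneg_left
              (mul_le_mul_of_nonneg_left hg_le (by norm_num : (0:ℝ) ≤ 18))
              (by positivity : (0:ℝ) ≤ (2*Real.pi)^3)
    -- conclude
    rw [Phi, if_neg hDz, norm_div, Complex.norm_real, Real.norm_eq_abs]
    have hden : |((2*Real.pi)^3 * sobNormSq 0 c)| = (2*Real.pi)^3 * D := by
      rw [abs_of_pos]
      exact mul_pos (by positivity) hDpos
    rw [hden, div_le_iff₀ (by positivity)]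
    calc ‖Psi c c c‖
        ≤ (2*Real.pi)^3 * (18 * ((∑' j, a j) * (∑' j, a j ^ 2))) := hPsi
      _ = 18 * (∑' j, a j) * ((2*Real.pi)^3 * (∑' j, a j ^ 2)) := by ring
      _ = (18 * ∑' (k : Z3), b k * Real.exp (-(knormSq k) * τ)) * ((2*Real.pi)^3 * D) := by
          rw [hD]

set_option maxHeartbeats 1000000 in
/-- for 0 < β < 1/2 there is c₁ > 0 with
|∫₀ᵗ Φ(S(τ;y₀))dτ| ≤ c₁‖y₀‖_{-β} for all y₀ ∈ V^{-β} and t > 0. -/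
theorem stmt1 (β : ℝ) (hβ0 : 0 < β) (hβ : β < 1/2) :
    ∃ c₁ > (0:ℝ), ∀ y₀ : Z3 → C3, DivFree y₀ → MeanZero y₀ →
      Summable (fun k : Z3 => (knorm k) ^ (2*(-β)) * (∑ i, ‖y₀ k i‖ ^ 2)) →
      ∀ t > (0:ℝ),
        ‖∫ τ in Set.Ioc (0:ℝ) t, Phi (heat τ y₀)‖ ≤ c₁ * sobNorm (-β) y₀ := by
  classical
  have hZs : Summable (fun k : Z3 => knorm k ^ (-(4 - 2*β))) :=
    lattice_summable (by linarith)
  set Z : ℝ := ∑' k : Z3, knorm k ^ (-(4 - 2*β)) with hZdef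
  have hZ0 : 0 ≤ Z := tsum_nonneg fun k => Real.rpow_nonneg (knorm_nonneg k) _
  refine ⟨18 * Real.sqrt Z + 1, by positivity, ?_⟩
  intro y₀ _hdf hmz hsum t ht
  set M : ℝ := sobNorm (-β) y₀ with hMdef
  have hM0 : 0 ≤ M := Real.sqrt_nonneg _
  set b : Z3 → ℝ := fun k => Real.sqrt (∑ i, ‖y₀ k i‖^2) with hbdef
  have hb0 : ∀ k, 0 ≤ b k := fun k => Real.sqrt_nonneg _
  have hbsq : ∀ k, b k ^ 2 = ∑ i, ‖y₀ k i‖ ^ 2 := fun k =>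
    Real.sq_sqrt (Finset.sum_nonneg fun i _ => sq_nonneg _)
  -- Cauchy-Schwarz data
  set x : Z3 → ℝ := fun k => knorm k ^ (-β) * b k with hxdef
  set y : Z3 → ℝ := fun k => knorm k ^ (β - 2) with hydef
  have hx0 : ∀ k, 0 ≤ x k := fun k =>
    mul_nonneg (Real.rpow_nonneg (knorm_nonneg k) _) (hb0 k)
  have hy0 : ∀ k, 0 ≤ y k := fun k => Real.rpow_nonneg (knorm_nonneg k) _
  have hx2eq : ∀ k, x k ^ 2 = (knorm k) ^ (2*(-β)) * (∑ i, ‖y₀ k i‖ ^ 2) := by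
    intro k
    rw [hxdef, mul_pow, hbsq k]
    congr 1
    rw [← Real.rpow_natCast (knorm k ^ (-β)) 2, ← Real.rpow_mul (knorm_nonneg k)]
    congr 1
    push_cast; ring
  have hy2eq : ∀ k, y k ^ 2 = knorm k ^ (-(4 - 2*β)) := by
    intro k
    rw [hydef, ← Real.rpow_natCast (knorm k ^ (β - 2)) 2, ← Real.rpow_mul (knorm_nonneg k)]
    congr 1
    push_cast; ring
  have hx2 : Summable fun k => x k ^ 2 := by
    refine hsum.congr fun k => (hx2eq k).symm
  have hy2 : Summable fun k => y k ^ 2 := by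
    refine hZs.congr fun k => (hy2eq k).symm
  have hxyeq : ∀ k, x k * y k = b k * (knormSq k)⁻¹ := by
    intro k
    by_cases hk : k = 0
    · subst hk
      rw [hxdef, hydef]
      simp only [knorm_zero]
      rw [Real.zero_rpow (neg_ne_zero.2 (ne_of_gt hβ0)),
        Real.zero_rpow (by intro h; linarith : β - 2 ≠ 0), knormSq_zero]
      simp
    · have hK : 0 < knorm k := knorm_pos hk
      rw [hxdef, hydef]
      have : knorm k ^ (-β) * b k * knorm k ^ (β - 2)
          = b k * (knorm k ^ (-β) * knorm k ^ (β - 2)) := by ring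
      rw [this, ← Real.rpow_add hK]
      congr 1
      rw [show -β + (β - 2) = -(2:ℝ) by ring, Real.rpow_neg (knorm_nonneg k)]
      congr 1
      rw [show ((2:ℝ)) = ((2:ℕ):ℝ) by norm_num, Real.rpow_natCast, knorm_sq]
  have hBsum : Summable fun k => b k * (knormSq k)⁻¹ :=
    (summable_mul_of_sq hx2 hy2).congr hxyeq
  have hB_le : (∑' k, b k * (knormSq k)⁻¹) ≤ M * Real.sqrt Z := by
    have h1 : (∑' k, b k * (knormSq k)⁻¹) = ∑' k, x k * y k :=
      (tsum_congr hxyeq).symm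
    rw [h1]
    refine (tsum_mul_le_sqrt hx0 hy0 hx2 hy2).trans ?_
    have e1 : (∑' k, x k ^ 2) = sobNormSq (-β) y₀ := by
      rw [sobNormSq]
      exact tsum_congr hx2eq
    have e2 : (∑' k, y k ^ 2) = Z := by
      rw [hZdef]
      exact tsum_congr hy2eq
    rw [e1, e2, hMdef, sobNorm]
  -- the integral
  by_cases hInt : Integrable (fun τ => Phi (heat τ y₀)) (volume.restrict (Set.Ioc 0 t))
  · have h1 : ‖∫ τ in Set.Ioc (0:ℝ) t, Phi (heat τ y₀)‖ ≤
        ∫ τ in Set.Ioc (0:ℝ) t, ‖Phi (heat τ y₀)‖ := by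
      exact
        norm_integral_le_integral_norm (μ := volume.restrict (Set.Ioc (0:ℝ) t))
          (fun τ => Phi (heat τ y₀))
    have hmeas : AEStronglyMeasurable (fun τ => ‖Phi (heat τ y₀)‖)
        (volume.restrict (Set.Ioc (0:ℝ) t)) := by
      exact hInt.aestronglyMeasurable.norm
    have h2 : ∫ τ in Set.Ioc (0:ℝ) t, ‖Phi (heat τ y₀)‖ =
        (∫⁻ τ in Set.Ioc (0:ℝ) t, ENNReal.ofReal (‖Phi (heat τ y₀)‖)).toReal :=
      integral_eq_lintegral_of_nonneg_ae
        (Filter.Eventually.of_forall fun τ => norm_nonneg _) hmeas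
    have key : (∫⁻ τ in Set.Ioc (0:ℝ) t, ENNReal.ofReal (‖Phi (heat τ y₀)‖))
        ≤ ENNReal.ofReal (18 * (M * Real.sqrt Z)) := by
      have step1 : (∫⁻ τ in Set.Ioc (0:ℝ) t, ENNReal.ofReal (‖Phi (heat τ y₀)‖))
          ≤ ∫⁻ τ in Set.Ioc (0:ℝ) t,
              ∑' k : Z3, ENNReal.ofReal ((18 * b k) * Real.exp (-(knormSq k) * τ)) := by
        apply lintegral_mono_ae
        rw [ae_restrict_iff' measurableSet_Ioc]
        refine Filter.Eventually.of_forall fun τ hτ => ?_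
        have hτ0 : 0 < τ := hτ.1
        calc ENNReal.ofReal (‖Phi (heat τ y₀)‖)
            ≤ ENNReal.ofReal (18 * ∑' k, b k * Real.exp (-(knormSq k) * τ)) :=
              ENNReal.ofReal_le_ofReal (phi_le β hβ0 hβ y₀ hmz hsum hτ0)
          _ = ENNReal.ofReal (∑' k, (18 * b k) * Real.exp (-(knormSq k) * τ)) := by
              rw [← tsum_mul_left]
              congr 1
              exact tsum_congr fun k => by ring
          _ = ∑' k, ENNReal.ofReal ((18 * b k) * Real.exp (-(knormSq k) * τ)) := by
              refine ENNReal.ofReal_tsum_of_nonneg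
                (fun k => mul_nonneg (by positivity) (Real.exp_pos _).le) ?_
              refine ((heat_l1 β hβ0 hβ y₀ hmz hsum hτ0).mul_left 18).congr fun k => by ring
      have step2 : (∫⁻ τ in Set.Ioc (0:ℝ) t,
            ∑' k : Z3, ENNReal.ofReal ((18 * b k) * Real.exp (-(knormSq k) * τ)))
          = ∑' k : Z3, ∫⁻ τ in Set.Ioc (0:ℝ) t,
              ENNReal.ofReal ((18 * b k) * Real.exp (-(knormSq k) * τ)) := by
        refine lintegral_tsum fun k => ?_
        have hcont : Continuous fun τ : ℝ => (18 * b k) * Real.exp (-(knormSq k) * τ) := by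
          fun_prop
        exact (ENNReal.measurable_ofReal.comp hcont.measurable).aemeasurable
      have step3 : ∀ k : Z3, (∫⁻ τ in Set.Ioc (0:ℝ) t,
            ENNReal.ofReal ((18 * b k) * Real.exp (-(knormSq k) * τ)))
          ≤ ENNReal.ofReal ((18 * b k) * (knormSq k)⁻¹) := by
        intro k
        by_cases hk : k = 0
        · subst hk
          have hb00 : b 0 = 0 := by
            have h0 : y₀ 0 = 0 := hmz
            simp [hbdef, h0]
          simp [hb00]
        · have hq0 : 0 < knormSq k := lt_of_lt_of_le one_pos (one_le_knormSq hk)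
          have hIntk : IntegrableOn
              (fun τ : ℝ => (18 * b k) * Real.exp (-(knormSq k) * τ)) (Set.Ioi 0) :=
            (exp_neg_integrableOn_Ioi 0 hq0).const_mul _
          calc (∫⁻ τ in Set.Ioc (0:ℝ) t,
                ENNReal.ofReal ((18 * b k) * Real.exp (-(knormSq k) * τ)))
              ≤ ∫⁻ τ in Set.Ioi (0:ℝ),
                ENNReal.ofReal ((18 * b k) * Real.exp (-(knormSq k) * τ)) :=
                lintegral_mono_set Set.Ioc_subset_Ioi_self
            _ = ENNReal.ofReal (∫ τ in Set.Ioi (0:ℝ),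
                  (18 * b k) * Real.exp (-(knormSq k) * τ)) :=
                (ofReal_integral_eq_lintegral_ofReal hIntk
                  (Filter.Eventually.of_forall fun τ =>
                    mul_nonneg (by positivity) (Real.exp_pos _).le)).symm
            _ ≤ ENNReal.ofReal ((18 * b k) * (knormSq k)⁻¹) := by
                apply ENNReal.ofReal_le_ofReal
                rw [MeasureTheory.integral_const_mul]
                have hval : (∫ τ in Set.Ioi (0:ℝ), Real.exp (-(knormSq k) * τ))
                    = (knormSq k)⁻¹ := by
                  have hcomp : (∫ τ in Set.Ioi (0:ℝ), Real.exp (-(knormSq k * τ)))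
                      = (knormSq k)⁻¹ • ∫ s in Set.Ioi (knormSq k * 0), Real.exp (-s) :=
                    integral_comp_mul_left_Ioi (fun s => Real.exp (-s)) 0 hq0
                  rw [show (∫ τ in Set.Ioi (0:ℝ), Real.exp (-(knormSq k) * τ))
                      = ∫ τ in Set.Ioi (0:ℝ), Real.exp (-(knormSq k * τ)) by
                        congr 1; funext τ; congr 1; ring]
                  rw [hcomp, mul_zero, integral_exp_neg_Ioi, neg_zero, Real.exp_zero,
                    smul_eq_mul, mul_one]
                rw [hval]
      calc (∫⁻ τ in Set.Ioc (0:ℝ) t, ENNReal.ofReal (‖Phi (heat τ y₀)‖))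
          ≤ ∑' k : Z3, ∫⁻ τ in Set.Ioc (0:ℝ) t,
              ENNReal.ofReal ((18 * b k) * Real.exp (-(knormSq k) * τ)) := by
            rw [← step2]; exact step1
        _ ≤ ∑' k : Z3, ENNReal.ofReal ((18 * b k) * (knormSq k)⁻¹) :=
            ENNReal.tsum_le_tsum step3
        _ = ENNReal.ofReal (∑' k : Z3, (18 * b k) * (knormSq k)⁻¹) := by
            refine (ENNReal.ofReal_tsum_of_nonneg
              (fun k => mul_nonneg (by positivity) (inv_nonneg.2 (knormSq_nonneg k))) ?_).symm
            exact (hBsum.mul_left 18).congr fun k => by ring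
        _ ≤ ENNReal.ofReal (18 * (M * Real.sqrt Z)) := by
            apply ENNReal.ofReal_le_ofReal
            have : (∑' k : Z3, (18 * b k) * (knormSq k)⁻¹)
                = 18 * ∑' k : Z3, b k * (knormSq k)⁻¹ := by
              rw [← tsum_mul_left]
              exact tsum_congr fun k => by ring
            rw [this]
            exact mul_le_mul_of_nonneg_left hB_le (by norm_num)
    calc ‖∫ τ in Set.Ioc (0:ℝ) t, Phi (heat τ y₀)‖
        ≤ ∫ τ in Set.Ioc (0:ℝ) t, ‖Phi (heat τ y₀)‖ := h1
      _ = (∫⁻ τ in Set.Ioc (0:ℝ) t, ENNReal.ofReal (‖Phi (heat τ y₀)‖)).toReal :=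
          h2
      _ ≤ (ENNReal.ofReal (18 * (M * Real.sqrt Z))).toReal :=
          ENNReal.toReal_mono ENNReal.ofReal_ne_top key
      _ = 18 * (M * Real.sqrt Z) :=
          ENNReal.toReal_ofReal (by positivity)
      _ ≤ (18 * Real.sqrt Z + 1) * M := by nlinarith [Real.sqrt_nonneg Z]
  · rw [integral_undef hInt]
    rw [norm_zero]
    have : (0:ℝ) ≤ (18 * Real.sqrt Z + 1) * M := by positivity
    exact this
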